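/- Cramer's V formula: consider two variables j and j' of the same block of the one-factor binary model, with β_j ≤ β_{j'} and β_j, β_{j'} ∈ (0,1). Let p_{hh'} := ∫₀¹ p_j(u)^h(1−p_j(u))^{1−h} · p_{j'}(u)^{h'}(1−p_{j'}(u))^{1−h'} du for h, h' ∈ {0,1}, let p_{h·} and p_{·h'} denote the corresponding marginal probabilities, and let V := sqrt( Σ_{h=0}^1 Σ_{h'=0}^1 (p_{hh'} − p_{h·}p_{·h'})² / (p_{h·}p_{·h'}) ). Then V = ε_j ε_{j'} · sqrt( β_j(1−β_{j'}) / ( β_{j'}(1−β_j) ) ). -/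

import Mathlib

open MeasureTheory

lemma indIntegrable (β K : ℝ) :
    IntervalIntegrable (fun u : ℝ => if u < β then K else 0) volume 0 1 := by
  have h : (fun u : ℝ => if u < β then K else 0)
      = Set.indicator (Set.Iio β) (fun _ => K) := by
    funext u; simp [Set.indicator_apply]
  rw [h, intervalIntegrable_iff]
  exact (integrableOn_const (by simp) (by simp)).indicator measurableSet_Iio

lemma indInt (β K : ℝ) (h0 : 0 ≤ β) (h1 : β ≤ 1) :
    ∫ u in (0:ℝ)..1, (if u < β then K else 0) = β * K := by
  have h : (fun u : ℝ => if u < β then K else 0)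
      = Set.indicator (Set.Iio β) (fun _ => K) := by
    funext u; simp [Set.indicator_apply]
  rw [intervalIntegral.integral_of_le zero_le_one, h,
    integral_indicator measurableSet_Iio,
    Measure.restrict_restrict measurableSet_Iio, setIntegral_const]
  have h2 : Set.Iio β ∩ Set.Ioc 0 1 = Set.Ioo 0 β := by
    ext x
    simp only [Set.mem_inter_iff, Set.mem_Iio, Set.mem_Ioc, Set.mem_Ioo]
    constructor
    · rintro ⟨hx, hx0, _⟩; exact ⟨hx0, hx⟩
    · rintro ⟨hx0, hx⟩; exact ⟨hx, hx0, hx.le.trans h1⟩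
  rw [h2, measureReal_def, Real.volume_Ioo]
  simp [ENNReal.toReal_ofReal h0, smul_eq_mul]

lemma pieceInt (β1 β2 A B C D : ℝ) (h0 : 0 ≤ β1) (h12 : β1 ≤ β2) (h2 : β2 ≤ 1) :
    ∫ u in (0:ℝ)..1, (if u < β1 then A else B) * (if u < β2 then C else D)
      = β1 * (A * C) + (β2 - β1) * (B * C) + (1 - β2) * (B * D) := by
  have key : ∀ u : ℝ, (if u < β1 then A else B) * (if u < β2 then C else D)
      = B * D + ((if u < β2 then B * C - B * D else 0)
        + (if u < β1 then A * C - B * C else 0)) := by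
    intro u
    by_cases hu1 : u < β1 <;> by_cases hu2 : u < β2 <;> simp [hu1, hu2] <;> ring_nf
    · exact absurd (hu1.trans_le h12) hu2
  simp_rw [key]
  rw [intervalIntegral.integral_add intervalIntegrable_const
      ((indIntegrable β2 _).add (indIntegrable β1 _)),
    intervalIntegral.integral_add (indIntegrable β2 _) (indIntegrable β1 _),
    intervalIntegral.integral_const,
    indInt β2 _ (h0.trans h12) h2, indInt β1 _ h0 (h12.trans h2)]
  simp; ring

/-- **Cramer's V formula (Proposition 3).**
For two variables of the same block of the one-factor binary model, with parameters
`(α₁,ε₁,δ₁)` and `(α₂,ε₂,δ₂)`, `β₁ ≤ β₂`, `β₁, β₂ ∈ (0,1)`, joint probabilities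
`p h h' = ∫₀¹ p₁(u)^h (1-p₁(u))^(1-h) p₂(u)^{h'} (1-p₂(u))^(1-h') du`, marginals
`pr h = p h 0 + p h 1`, `pc h' = p 0 h' + p 1 h'`, Cramer's V
`V = sqrt(∑_{h,h'∈{0,1}} (p h h' - pr h ⬝ pc h')² / (pr h ⬝ pc h'))` satisfies
`V = ε₁ ε₂ sqrt( β₁(1-β₂) / (β₂(1-β₁)) )`. -/
theorem cramers_V_formula
    (α1 ε1 δ1 α2 ε2 δ2 β1 β2 lam1 ν1 lam2 ν2 : ℝ)
    (hα1 : α1 ∈ Set.Ioo (0:ℝ) 1) (hα2 : α2 ∈ Set.Ioo (0:ℝ) 1)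
    (hε1 : ε1 ∈ Set.Ioo (0:ℝ) 1) (hε2 : ε2 ∈ Set.Ioo (0:ℝ) 1)
    (hδ1 : δ1 = 0 ∨ δ1 = 1) (hδ2 : δ2 = 0 ∨ δ2 = 1)
    (hβ1 : β1 = if δ1 = 1 then α1 else 1 - α1)
    (hβ2 : β2 = if δ2 = 1 then α2 else 1 - α2)
    (hlam1 : lam1 = (1 - ε1) * α1 + ε1 * δ1) (hν1 : ν1 = (1 - ε1) * α1 + ε1 * (1 - δ1))
    (hlam2 : lam2 = (1 - ε2) * α2 + ε2 * δ2) (hν2 : ν2 = (1 - ε2) * α2 + ε2 * (1 - δ2))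
    (hβ1m : β1 ∈ Set.Ioo (0:ℝ) 1) (hβ2m : β2 ∈ Set.Ioo (0:ℝ) 1) (hord : β1 ≤ β2)
    (p : ℕ → ℕ → ℝ)
    (hp : ∀ h h', p h h' = ∫ u in (0:ℝ)..1,
      ((if u < β1 then lam1 else ν1) ^ h *
        (1 - (if u < β1 then lam1 else ν1)) ^ (1 - h)) *
      ((if u < β2 then lam2 else ν2) ^ h' *
        (1 - (if u < β2 then lam2 else ν2)) ^ (1 - h')))
    (pr pc : ℕ → ℝ)
    (hpr : ∀ h, pr h = p h 0 + p h 1)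
    (hpc : ∀ h', pc h' = p 0 h' + p 1 h')
    (V : ℝ)
    (hV : V = Real.sqrt (∑ h ∈ Finset.range 2, ∑ h' ∈ Finset.range 2,
      (p h h' - pr h * pc h') ^ 2 / (pr h * pc h'))) :
    V = ε1 * ε2 * Real.sqrt (β1 * (1 - β2) / (β2 * (1 - β1))) := by
  obtain ⟨hβ1p, hβ1l⟩ := hβ1m
  obtain ⟨hβ2p, hβ2l⟩ := hβ2m
  -- the four joint probabilities
  have hp00 : p 0 0 = β1 * ((1-lam1) * (1-lam2)) + (β2-β1) * ((1-ν1) * (1-lam2))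
      + (1-β2) * ((1-ν1) * (1-ν2)) := by
    rw [hp 0 0, ← pieceInt β1 β2 (1-lam1) (1-ν1) (1-lam2) (1-ν2) hβ1p.le hord hβ2l.le]
    apply intervalIntegral.integral_congr
    intro u _
    by_cases h1 : u < β1 <;> by_cases h2 : u < β2 <;> simp [h1, h2]
  have hp01 : p 0 1 = β1 * ((1-lam1) * lam2) + (β2-β1) * ((1-ν1) * lam2)
      + (1-β2) * ((1-ν1) * ν2) := by
    rw [hp 0 1, ← pieceInt β1 β2 (1-lam1) (1-ν1) lam2 ν2 hβ1p.le hord hβ2l.le]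
    apply intervalIntegral.integral_congr
    intro u _
    by_cases h1 : u < β1 <;> by_cases h2 : u < β2 <;> simp [h1, h2]
  have hp10 : p 1 0 = β1 * (lam1 * (1-lam2)) + (β2-β1) * (ν1 * (1-lam2))
      + (1-β2) * (ν1 * (1-ν2)) := by
    rw [hp 1 0, ← pieceInt β1 β2 lam1 ν1 (1-lam2) (1-ν2) hβ1p.le hord hβ2l.le]
    apply intervalIntegral.integral_congr
    intro u _
    by_cases h1 : u < β1 <;> by_cases h2 : u < β2 <;> simp [h1, h2]
  have hp11 : p 1 1 = β1 * (lam1 * lam2) + (β2-β1) * (ν1 * lam2)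
      + (1-β2) * (ν1 * ν2) := by
    rw [hp 1 1, ← pieceInt β1 β2 lam1 ν1 lam2 ν2 hβ1p.le hord hβ2l.le]
    apply intervalIntegral.integral_congr
    intro u _
    by_cases h1 : u < β1 <;> by_cases h2 : u < β2 <;> simp [h1, h2]
  -- marginals as polynomials
  have hpr1 : pr 1 = β1 * lam1 + (1-β1) * ν1 := by rw [hpr, hp10, hp11]; ring
  have hpr0 : pr 0 = 1 - (β1 * lam1 + (1-β1) * ν1) := by rw [hpr, hp00, hp01]; ring
  have hpc1 : pc 1 = β2 * lam2 + (1-β2) * ν2 := by rw [hpc, hp01, hp11]; ring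
  have hpc0 : pc 0 = 1 - (β2 * lam2 + (1-β2) * ν2) := by rw [hpc, hp00, hp10]; ring
  -- identities via case analysis on δ
  have hm1 : β1 * lam1 + (1-β1) * ν1 = α1 := by
    rcases hδ1 with h | h <;> subst h <;> rw [hβ1, hlam1, hν1] <;> norm_num <;> ring
  have hm2 : β2 * lam2 + (1-β2) * ν2 = α2 := by
    rcases hδ2 with h | h <;> subst h <;> rw [hβ2, hlam2, hν2] <;> norm_num <;> ring
  have hd1 : (lam1 - ν1)^2 = ε1^2 := by
    rcases hδ1 with h | h <;> subst h <;> rw [hlam1, hν1] <;> ring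
  have hd2 : (lam2 - ν2)^2 = ε2^2 := by
    rcases hδ2 with h | h <;> subst h <;> rw [hlam2, hν2] <;> ring
  have hb1 : α1 * (1 - α1) = β1 * (1 - β1) := by
    rcases hδ1 with h | h <;> subst h <;> rw [hβ1] <;> norm_num <;> ring
  have hb2 : α2 * (1 - α2) = β2 * (1 - β2) := by
    rcases hδ2 with h | h <;> subst h <;> rw [hβ2] <;> norm_num <;> ring
  set c : ℝ := β1 * (1-β2) * ((lam1 - ν1) * (lam2 - ν2)) with hc
  -- numerators
  have e11 : p 1 1 - pr 1 * pc 1 = c := by rw [hp11, hpr1, hpc1, hc]; ring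
  have e10 : p 1 0 - pr 1 * pc 0 = -c := by rw [hp10, hpr1, hpc0, hc]; ring
  have e01 : p 0 1 - pr 0 * pc 1 = -c := by rw [hp01, hpr0, hpc1, hc]; ring
  have e00 : p 0 0 - pr 0 * pc 0 = c := by rw [hp00, hpr0, hpc0, hc]; ring
  -- denominators in terms of α
  have d11 : pr 1 * pc 1 = α1 * α2 := by rw [hpr1, hpc1, hm1, hm2]
  have d10 : pr 1 * pc 0 = α1 * (1 - α2) := by rw [hpr1, hpc0, hm1, hm2]
  have d01 : pr 0 * pc 1 = (1 - α1) * α2 := by rw [hpr0, hpc1, hm1, hm2]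
  have d00 : pr 0 * pc 0 = (1 - α1) * (1 - α2) := by rw [hpr0, hpc0, hm1, hm2]
  have hα1p := hα1.1; have hα1l := hα1.2
  have hα2p := hα2.1; have hα2l := hα2.2
  have n1 : α1 ≠ 0 := ne_of_gt hα1p
  have n2 : (1:ℝ) - α1 ≠ 0 := by linarith
  have n3 : α2 ≠ 0 := ne_of_gt hα2p
  have n4 : (1:ℝ) - α2 ≠ 0 := by linarith
  have nb1 : β1 ≠ 0 := ne_of_gt hβ1p
  have nb2 : (1:ℝ) - β1 ≠ 0 := by linarith
  have nb3 : β2 ≠ 0 := ne_of_gt hβ2p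
  have nb4 : (1:ℝ) - β2 ≠ 0 := by linarith
  have hsum : (∑ h ∈ Finset.range 2, ∑ h' ∈ Finset.range 2,
      (p h h' - pr h * pc h') ^ 2 / (pr h * pc h'))
      = (ε1 * ε2)^2 * (β1 * (1 - β2) / (β2 * (1 - β1))) := by
    simp only [Finset.sum_range_succ, Finset.sum_range_zero, zero_add]
    rw [e11, e10, e01, e00, d11, d10, d01, d00]
    have step1 : c^2 / ((1-α1) * (1-α2)) + (-c)^2 / ((1-α1) * α2)
        + ((-c)^2 / (α1 * (1-α2)) + c^2 / (α1 * α2))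
        = c^2 / ((α1 * (1-α1)) * (α2 * (1-α2))) := by
      field_simp
      ring
    rw [step1, hb1, hb2]
    have hc2 : c^2 = (β1 * (1-β2))^2 * (ε1^2 * ε2^2) := by
      have : c^2 = (β1 * (1-β2))^2 * ((lam1-ν1)^2 * (lam2-ν2)^2) := by rw [hc]; ring
      rw [this, hd1, hd2]
    rw [hc2]
    field_simp
  rw [hV, hsum, Real.sqrt_mul (sq_nonneg _),
    Real.sqrt_sq (mul_nonneg hε1.1.le hε2.1.le)]
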